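/- For the GroupBy-count operator Op(X) = {(g, |{x ∈ X | key x = g}|) | g ∈ key '' X} over a finite table X, and target output row (g₀, c₀) ∈ Op(X), the subset G(X) = {x ∈ X | key x = g₀} is the unique minimal subset S ⊆ X such that (g₀, c₀) ∈ Op(S). -/
import Mathlib


/-- GroupBy-count operator: each group key paired with the number of rows in the group. -/
def groupCount {T K : Type*} [DecidableEq T] [DecidableEq K] (key : T → K)
    (X : Finset T) : Set (K × ℕ) :=
  {p | p.1 ∈ X.image key ∧ p.2 = (X.filter fun x => key x = p.1).card}

/-- for GroupBy-count the whole group is the unique minimal subset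
producing the output row `(g₀, c₀)`. -/
theorem stmt_7 {T K : Type*} [DecidableEq T] [DecidableEq K] (key : T → K)
    (X : Finset T) (g₀ : K) (c₀ : ℕ) (hout : (g₀, c₀) ∈ groupCount key X)
    (G : Finset T) (hG : G = X.filter fun x => key x = g₀) :
    G ⊆ X ∧ (g₀, c₀) ∈ groupCount key G ∧
    (∀ S' ⊂ G, (g₀, c₀) ∉ groupCount key S') ∧
    (∀ S ⊆ X, (g₀, c₀) ∈ groupCount key S →
      (∀ S' ⊂ S, (g₀, c₀) ∉ groupCount key S') → S = G) := by
  obtain ⟨hg, hc⟩ := hout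
  dsimp only at hc
  subst hG
  -- G is nonempty since g₀ is in the image
  obtain ⟨x, hxX, hxk⟩ := Finset.mem_image.mp hg
  have hxG : x ∈ X.filter fun x => key x = g₀ := Finset.mem_filter.mpr ⟨hxX, hxk⟩
  have hGsub : (X.filter fun x => key x = g₀) ⊆ X := Finset.filter_subset _ _
  have hfilt : ∀ S : Finset T, S ⊆ (X.filter fun x => key x = g₀) →
      (S.filter fun x => key x = g₀) = S := by
    intro S hS
    apply Finset.filter_true_of_mem
    intro y hy
    exact (Finset.mem_filter.mp (hS hy)).2
  have hmemG : (g₀, c₀) ∈ groupCount key (X.filter fun x => key x = g₀) := by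
    refine ⟨Finset.mem_image.mpr ⟨x, hxG, hxk⟩, ?_⟩
    simpa [hfilt _ (le_refl _)] using hc
  have hmin : ∀ S' ⊂ (X.filter fun x => key x = g₀),
      (g₀, c₀) ∉ groupCount key S' := by
    intro S' hS' ⟨_, hcS'⟩
    dsimp only at hcS'
    have h1 : (S'.filter fun x => key x = g₀) = S' := hfilt _ hS'.subset
    rw [h1] at hcS'
    have : S'.card < (X.filter fun x => key x = g₀).card :=
      Finset.card_lt_card hS'
    omega
  refine ⟨hGsub, hmemG, hmin, ?_⟩
  intro S hSX hmem hminS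
  obtain ⟨hgS, hcS⟩ := hmem
  dsimp only at hcS
  have hSfG : (S.filter fun x => key x = g₀) ⊆ (X.filter fun x => key x = g₀) :=
    Finset.filter_subset_filter _ hSX
  -- S.filter = G by cardinality
  have hcard : (S.filter fun x => key x = g₀).card =
      (X.filter fun x => key x = g₀).card := by rw [← hcS, ← hc]
  have hfeq : (S.filter fun x => key x = g₀) = (X.filter fun x => key x = g₀) :=
    Finset.eq_of_subset_of_card_le hSfG (le_of_eq hcard.symm)
  -- S.filter = S by minimality of S
  have hnot : ¬ (S.filter fun x => key x = g₀) ⊂ S := by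
    intro hss
    refine hminS _ hss ⟨?_, ?_⟩
    · obtain ⟨y, hyS, hyk⟩ := Finset.mem_image.mp hgS
      exact Finset.mem_image.mpr ⟨y, Finset.mem_filter.mpr ⟨hyS, hyk⟩, hyk⟩
    · rw [hfilt _ (le_of_eq hfeq)]; exact hcS
  have : (S.filter fun x => key x = g₀) = S := by
    by_cases h : (S.filter fun x => key x = g₀) = S
    · exact h
    · exact absurd (Finset.ssubset_iff_subset_ne.mpr ⟨Finset.filter_subset _ _, h⟩) hnot
  rw [← this, hfeq]
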